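/- arXiv:1208.3002 — 2 statements merged into one kernel-verified Lean document; each statement's English description precedes it below -/
import Mathlib

section
/- Let p > 1, a > 0, R > 0. For δ > 0 sufficiently small, there exists s ∈ (0, R) satisfying the equation δ^{2/(p-1)} s^{-2/(p-1)} φ'(1) = a / ln(s/R), where φ'(1) < 0 is the boundary radial derivative of the unique positive radial solution of -Δφ = φ^p on B_1(0). Moreover, as δ → 0, s / (δ |ln δ|^{(p-1)/2}) → (|φ'(1)|/a)^{(p-1)/2}. -/
open Real Set Filter
open scoped Topology

/-- For δ > 0 small there is s ∈ (0,R) with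
δ^{2/(p-1)} s^{-2/(p-1)} φ'(1) = a/ln(s/R) (here c = φ'(1) < 0), and the
solution satisfies s/(δ|ln δ|^{(p-1)/2}) → (|c|/a)^{(p-1)/2} as δ → 0⁺. -/
theorem stmt3 (p a R c : ℝ) (hp : 1 < p) (ha : 0 < a) (hR : 0 < R) (hc : c < 0) :
    ∃ s : ℝ → ℝ,
      (∀ᶠ δ in 𝓝[>] (0:ℝ), s δ ∈ Set.Ioo 0 R ∧
        δ ^ (2 / (p - 1)) * (s δ) ^ (-(2 / (p - 1))) * c = a / Real.log (s δ / R)) ∧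
      Tendsto (fun δ => s δ / (δ * |Real.log δ| ^ ((p - 1) / 2))) (𝓝[>] (0:ℝ))
        (𝓝 ((|c| / a) ^ ((p - 1) / 2))) := by
  classical
  have hp1 : (0:ℝ) < p - 1 := by linarith
  set β : ℝ := (p - 1) / 2 with hβdef
  have hβ : 0 < β := by positivity
  set k : ℝ := (-c) / a with hkdef
  have hk : 0 < k := div_pos (neg_pos.2 hc) ha
  set g : ℝ → ℝ := fun x => x * (k * Real.log (R / x)) ^ (-β) with hgdef
  have hR2 : (0:ℝ) < R / 2 := half_pos hR
  have hR2R : R / 2 < R := half_lt_self hR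
  -- positivity of log on (0,R)
  have hL : ∀ x ∈ Ioo (0:ℝ) R, 0 < Real.log (R / x) := fun x hx =>
    Real.log_pos ((one_lt_div hx.1).2 hx.2)
  have hgpos : ∀ x ∈ Ioo (0:ℝ) R, 0 < g x := fun x hx =>
    mul_pos hx.1 (Real.rpow_pos_of_pos (mul_pos hk (hL x hx)) _)
  -- strict monotonicity
  have hmono : StrictMonoOn g (Ioo 0 R) := by
    intro x hx y hy hxy
    have hLx := hL x hx
    have hLy := hL y hy
    have hlt : Real.log (R / y) < Real.log (R / x) :=
      Real.log_lt_log (div_pos hR hy.1) (div_lt_div_of_pos_left hR hx.1 hxy)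
    have h2 : (k * Real.log (R / x)) ^ (-β) < (k * Real.log (R / y)) ^ (-β) :=
      Real.rpow_lt_rpow_of_neg (mul_pos hk hLy) (mul_lt_mul_of_pos_left hlt hk)
        (neg_neg_iff_pos.2 hβ)
    exact mul_lt_mul'' hxy h2 hx.1.le
      (Real.rpow_pos_of_pos (mul_pos hk hLx) _).le
  -- continuity
  have hcont : ContinuousOn g (Ioo 0 R) := by
    apply ContinuousOn.mul continuousOn_id
    apply ContinuousOn.rpow_const
    · exact continuousOn_const.mul
        ((continuousOn_const.div continuousOn_id fun x hx => ne_of_gt hx.1).log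
          fun x hx => (div_pos hR hx.1).ne')
    · intro x hx
      exact Or.inl (mul_pos hk (hL x hx)).ne'
  -- g tends to 0
  have hg0 : Tendsto g (𝓝[>] (0:ℝ)) (𝓝 0) := by
    have hmem : Ioo (0:ℝ) (R/2) ∈ 𝓝[>] (0:ℝ) :=
      Ioo_mem_nhdsGT_of_mem ⟨le_refl 0, hR2⟩
    have hC : (0:ℝ) < (k * Real.log 2) ^ (-β) :=
      Real.rpow_pos_of_pos (mul_pos hk (Real.log_pos one_lt_two)) _
    apply squeeze_zero'
    · filter_upwards [hmem] with x hx
      exact (hgpos x ⟨hx.1, hx.2.trans hR2R⟩).le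
    · filter_upwards [hmem] with x hx
      have h2 : (2:ℝ) ≤ R / x := (le_div_iff₀ hx.1).2 (by linarith [hx.2])
      have hkl : k * Real.log 2 ≤ k * Real.log (R / x) :=
        mul_le_mul_of_nonneg_left (Real.log_le_log two_pos h2) hk.le
      have := Real.rpow_le_rpow_of_nonpos (mul_pos hk (Real.log_pos one_lt_two))
        hkl (neg_nonpos.2 hβ.le)
      calc g x ≤ x * (k * Real.log 2) ^ (-β) :=
            mul_le_mul_of_nonneg_left this hx.1.le
        _ = (k * Real.log 2) ^ (-β) * x := mul_comm _ _
    · have : Tendsto (fun x : ℝ => (k * Real.log 2) ^ (-β) * x) (𝓝 0)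
          (𝓝 ((k * Real.log 2) ^ (-β) * 0)) :=
        (continuous_const.mul continuous_id).tendsto 0
      simpa using this.mono_left nhdsWithin_le_nhds
  -- existence of small points with small g
  have hT : ∀ δ : ℝ, 0 < δ → ∃ t, t ∈ Ioo (0:ℝ) (R/2) ∧ g t < δ := by
    intro δ hδ
    have h1 : ∀ᶠ t in 𝓝[>] (0:ℝ), g t < δ := hg0.eventually (gt_mem_nhds hδ)
    have h2 : ∀ᶠ t in 𝓝[>] (0:ℝ), t ∈ Ioo (0:ℝ) (R/2) :=
      Ioo_mem_nhdsGT_of_mem ⟨le_refl 0, hR2⟩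
    obtain ⟨t, ht1, ht2⟩ := (h2.and h1).exists
    exact ⟨t, ht1, ht2⟩
  have hgR2pos : 0 < g (R/2) := hgpos _ ⟨hR2, hR2R⟩
  -- solvability
  have hP : ∀ δ ∈ Ioo (0:ℝ) (g (R/2)), ∃ x, x ∈ Ioo (0:ℝ) (R/2) ∧ g x = δ := by
    intro δ hδ
    obtain ⟨t, ht, hgt⟩ := hT δ hδ.1
    have hsub : Icc t (R/2) ⊆ Ioo (0:ℝ) R := fun x hx =>
      ⟨ht.1.trans_le hx.1, lt_of_le_of_lt hx.2 hR2R⟩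
    have hIVT := intermediate_value_Ioo ht.2.le (hcont.mono hsub)
    obtain ⟨x, hx, hgx⟩ := hIVT ⟨hgt, hδ.2⟩
    exact ⟨x, ⟨ht.1.trans hx.1, hx.2⟩, hgx⟩
  -- the solution function
  set s : ℝ → ℝ := fun δ =>
    if h : ∃ x, x ∈ Ioo (0:ℝ) (R/2) ∧ g x = δ then h.choose else R/4 with hsdef
  have hE : ∀ᶠ δ in 𝓝[>] (0:ℝ), s δ ∈ Ioo (0:ℝ) (R/2) ∧ g (s δ) = δ := by
    filter_upwards [Ioo_mem_nhdsGT_of_mem ⟨le_refl 0, hgR2pos⟩] with δ hδ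
    have h := hP δ hδ
    simp only [hsdef, dif_pos h]
    exact h.choose_spec
  -- the equation from g x = δ
  have heq : ∀ x ∈ Ioo (0:ℝ) R, ∀ δ : ℝ, 0 < δ → g x = δ →
      δ ^ (2 / (p - 1)) * x ^ (-(2 / (p - 1))) * c = a / Real.log (x / R) := by
    intro x hx δ hδ hg
    set α : ℝ := 2 / (p - 1) with hαdef
    have hα : 0 < α := by positivity
    have hβα : β * α = 1 := by
      rw [hβdef, hαdef]; field_simp
    set L : ℝ := Real.log (R / x) with hLdef
    have hLpos : 0 < L := hL x hx
    have hw : 0 < k * L := mul_pos hk hLpos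
    have hδeq : δ = x * (k * L) ^ (-β) := hg.symm
    have hδα : δ ^ α = x ^ α * (k * L) ^ (-(1:ℝ)) := by
      rw [hδeq, Real.mul_rpow hx.1.le (Real.rpow_pos_of_pos hw _).le,
        ← Real.rpow_mul hw.le]
      congr 2
      rw [neg_mul, hβα]
    have hxR : Real.log (x / R) = -L := by
      rw [hLdef, Real.log_div hR.ne' hx.1.ne', Real.log_div hx.1.ne' hR.ne']
      ring
    rw [hδα, hxR, Real.rpow_neg_one]
    have hxα : x ^ α * (k * L)⁻¹ * x ^ (-α) = (k * L)⁻¹ := by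
      rw [mul_comm (x ^ α) _, mul_assoc, ← Real.rpow_add hx.1, add_neg_cancel,
        Real.rpow_zero, mul_one]
    rw [hxα]
    rw [hkdef]
    have hcne : c ≠ 0 := hc.ne
    field_simp
  refine ⟨s, ?_, ?_⟩
  · filter_upwards [hE, self_mem_nhdsWithin] with δ hδE hδpos
    obtain ⟨hmem, hgs⟩ := hδE
    have hmem' : s δ ∈ Ioo (0:ℝ) R := ⟨hmem.1, hmem.2.trans hR2R⟩
    exact ⟨hmem', heq _ hmem' δ hδpos hgs⟩
  -- the asymptotics
  · have hsmall : ∀ ε : ℝ, 0 < ε → ∀ᶠ δ in 𝓝[>] (0:ℝ), s δ < ε := by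
      intro ε hε
      set ε' : ℝ := min ε (R/4) with hε'def
      have hε'pos : 0 < ε' := lt_min hε (by linarith)
      have hε'R : ε' ∈ Ioo (0:ℝ) R :=
        ⟨hε'pos, lt_of_le_of_lt (min_le_right _ _) (by linarith)⟩
      have hgε' : 0 < g ε' := hgpos _ hε'R
      filter_upwards [hE, Ioo_mem_nhdsGT_of_mem ⟨le_refl 0, hgε'⟩] with δ hδE hδ
      obtain ⟨hmem, hgs⟩ := hδE
      by_contra h
      push_neg at h
      have hle : ε' ≤ s δ := le_trans (min_le_left _ _) h
      have hmem' : s δ ∈ Ioo (0:ℝ) R := ⟨hmem.1, hmem.2.trans hR2R⟩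
      have : g ε' ≤ g (s δ) := hmono.monotoneOn hε'R hmem' hle
      rw [hgs] at this
      exact absurd hδ.2 (not_lt.2 this)
    have hs0 : Tendsto s (𝓝[>] (0:ℝ)) (𝓝 0) := by
      refine tendsto_order.2 ⟨?_, ?_⟩
      · intro b hb
        filter_upwards [hE] with δ hδE
        exact lt_trans hb hδE.1.1
      · intro b hb
        exact hsmall b hb
    have hspos : ∀ᶠ δ in 𝓝[>] (0:ℝ), s δ ∈ Ioi (0:ℝ) := by
      filter_upwards [hE] with δ hδE using hδE.1.1
    have hlogs : Tendsto (fun δ => -Real.log (s δ)) (𝓝[>] (0:ℝ)) atTop := by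
      have h1 : Tendsto (fun δ => Real.log (s δ)) (𝓝[>] (0:ℝ)) atBot :=
        Real.tendsto_log_nhdsGT_zero.comp
          (tendsto_nhdsWithin_iff.2 ⟨hs0, hspos⟩)
      exact tendsto_neg_atBot_atTop.comp h1
    -- the limit of the model function
    set G : ℝ → ℝ := fun u =>
      k * (Real.log R + u) / (u + β * Real.log (k * (Real.log R + u))) with hGdef
    have hG : Tendsto G atTop (𝓝 k) := by
      have hnum : Tendsto (fun u : ℝ => k * (Real.log R + u) / u) atTop (𝓝 k) := by
        have h1 : Tendsto (fun u : ℝ => k * Real.log R / u + k) atTop (𝓝 (0 + k)) :=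
          (tendsto_const_nhds.div_atTop tendsto_id).add tendsto_const_nhds
        rw [zero_add] at h1
        apply h1.congr'
        filter_upwards [eventually_ge_atTop (1:ℝ)] with u hu
        have hu0 : u ≠ 0 := by linarith
        field_simp
      have hlo : Tendsto (fun u : ℝ =>
          Real.log (k * (Real.log R + u)) / u) atTop (𝓝 0) := by
        have htend : Tendsto (fun u : ℝ => k * (Real.log R + u)) atTop atTop :=
          (tendsto_atTop_add_const_left _ _ tendsto_id).const_mul_atTop hk
        have h1 : (fun u : ℝ => Real.log (k * (Real.log R + u))) =o[atTop]
            (fun u : ℝ => k * (Real.log R + u)) :=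
          Real.isLittleO_log_id_atTop.comp_tendsto htend
        have h2 : (fun u : ℝ => k * (Real.log R + u)) =O[atTop] (fun u : ℝ => u) := by
          rw [Asymptotics.isBigO_iff]
          refine ⟨k * |Real.log R| + k, ?_⟩
          filter_upwards [eventually_ge_atTop (1:ℝ)] with u hu
          have hu0 : (0:ℝ) ≤ u := by linarith
          rw [Real.norm_eq_abs, Real.norm_eq_abs, abs_of_nonneg hu0, abs_mul,
            abs_of_pos hk]
          have h3 : |Real.log R + u| ≤ |Real.log R| + u := by
            calc |Real.log R + u| ≤ |Real.log R| + |u| := abs_add_le _ _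
              _ = |Real.log R| + u := by rw [abs_of_nonneg hu0]
          have h4 : |Real.log R| ≤ |Real.log R| * u :=
            le_mul_of_one_le_right (abs_nonneg _) hu
          nlinarith [hk.le, abs_nonneg (Real.log R)]
        exact (h1.trans_isBigO h2).tendsto_div_nhds_zero
      have hden : Tendsto (fun u : ℝ =>
          (u + β * Real.log (k * (Real.log R + u))) / u) atTop (𝓝 1) := by
        have h1 : Tendsto (fun u : ℝ =>
            1 + β * (Real.log (k * (Real.log R + u)) / u)) atTop (𝓝 (1 + β * 0)) :=
          tendsto_const_nhds.add (hlo.const_mul β)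
        rw [mul_zero, add_zero] at h1
        apply h1.congr'
        filter_upwards [eventually_ge_atTop (1:ℝ)] with u hu
        have hu0 : u ≠ 0 := by linarith
        field_simp
      have h' := hnum.div hden one_ne_zero
      rw [div_one] at h'
      apply h'.congr'
      filter_upwards [eventually_ge_atTop (1:ℝ)] with u hu
      have hu0 : u ≠ 0 := by linarith
      simp only [Pi.div_apply]
      rw [div_div_div_cancel_right₀ hu0]
    -- the ratio tends to k
    have hratio : Tendsto (fun δ => k * Real.log (R / s δ) / |Real.log δ|)
        (𝓝[>] (0:ℝ)) (𝓝 k) := by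
      apply (hG.comp hlogs).congr'
      filter_upwards [hE, Ioo_mem_nhdsGT_of_mem (α := ℝ)
        ⟨le_refl 0, one_pos⟩] with δ hδE hδ
      obtain ⟨hmem, hgs⟩ := hδE
      set x := s δ with hxdef
      have hx0 : 0 < x := hmem.1
      have hxR : x < R := hmem.2.trans hR2R
      have hLpos : 0 < Real.log (R / x) := hL x ⟨hx0, hxR⟩
      have hlogRx : Real.log (R / x) = Real.log R + -Real.log x := by
        rw [Real.log_div hR.ne' hx0.ne']; ring
      have hw : 0 < k * (Real.log R + -Real.log x) := by
        rw [← hlogRx]; exact mul_pos hk hLpos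
      have hlogδ : Real.log δ = Real.log x - β * Real.log (k * (Real.log R + -Real.log x)) := by
        rw [← hgs]
        have hgx : g x = x * (k * Real.log (R / x)) ^ (-β) := rfl
        rw [hgx, Real.log_mul hx0.ne' (Real.rpow_pos_of_pos (mul_pos hk hLpos) _).ne',
          Real.log_rpow (mul_pos hk hLpos), hlogRx]
        ring
      have habs : |Real.log δ| =
          -(Real.log x - β * Real.log (k * (Real.log R + -Real.log x))) := by
        rw [abs_of_neg (Real.log_neg hδ.1 hδ.2), hlogδ]
      show G (-Real.log x) = k * Real.log (R / x) / |Real.log δ|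
      rw [hGdef, habs, hlogRx]
      ring_nf
    -- conclude
    have hfinal : Tendsto (fun δ => (k * Real.log (R / s δ) / |Real.log δ|) ^ β)
        (𝓝[>] (0:ℝ)) (𝓝 (k ^ β)) := hratio.rpow_const (Or.inl hk.ne')
    have hkabs : |c| / a = k := by rw [abs_of_neg hc]
    rw [hkabs]
    apply hfinal.congr'
    filter_upwards [hE, Ioo_mem_nhdsGT_of_mem (α := ℝ)
      ⟨le_refl 0, one_pos⟩] with δ hδE hδ
    obtain ⟨hmem, hgs⟩ := hδE
    set x := s δ with hxdef
    have hx0 : 0 < x := hmem.1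
    have hLpos : 0 < Real.log (R / x) := hL x ⟨hx0, hmem.2.trans hR2R⟩
    have hw : 0 < k * Real.log (R / x) := mul_pos hk hLpos
    have hlδ : 0 < |Real.log δ| := abs_pos.2 (Real.log_neg hδ.1 hδ.2).ne
    have hδeq : δ = x * (k * Real.log (R / x)) ^ (-β) := hgs.symm
    have hwβ : (0:ℝ) < (k * Real.log (R / x)) ^ β := Real.rpow_pos_of_pos hw _
    have hlβ : (0:ℝ) < |Real.log δ| ^ β := Real.rpow_pos_of_pos hlδ _
    have hxδ : x / δ = (k * Real.log (R / x)) ^ β := by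
      rw [hδeq, Real.rpow_neg hw.le, eq_comm, eq_div_iff (by positivity)]
      calc (k * Real.log (R / x)) ^ β * (x * ((k * Real.log (R / x)) ^ β)⁻¹)
          = ((k * Real.log (R / x)) ^ β * ((k * Real.log (R / x)) ^ β)⁻¹) * x := by ring
        _ = x := by rw [mul_inv_cancel₀ hwβ.ne', one_mul]
    rw [Real.div_rpow hw.le (abs_nonneg _), div_mul_eq_div_div, hxδ]
end

section
/- Let Ω ⊂ ℝ² be a bounded domain, R > 0 such that Ω is contained in B_R(x) for every x ∈ Ω. Let W_{δ,a}(x) be defined by W_{δ,a}(x) = a + δ^{2/(p-1)} s^{-2/(p-1)} φ(|x|/s) for |x| ≤ s and W_{δ,a}(x) = a·ln(|x|/R)/ln(s/R) for s ≤ |x| ≤ R, where s ∈ (0,R) satisfies δ^{2/(p-1)} s^{-2/(p-1)} φ'(1) = a/ln(s/R). Then W_{δ,a} is C¹ on B_R(0), vanishes on ∂B_R(0), and satisfies -δ²ΔW_{δ,a} = (W_{δ,a} - a)_+^p in B_R(0). -/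
open MeasureTheory Real Set

/-- The Laplacian of a function on ℝ². -/
noncomputable def lap (u : EuclideanSpace ℝ (Fin 2) → ℝ)
    (x : EuclideanSpace ℝ (Fin 2)) : ℝ :=
  ∑ i : Fin 2, iteratedFDeriv ℝ 2 u x
    ![EuclideanSpace.single i 1, EuclideanSpace.single i 1]

noncomputable abbrev E2 := EuclideanSpace ℝ (Fin 2)

noncomputable def rinnerSL : E2 →L[ℝ] E2 →L[ℝ] ℝ := innerSL ℝ

@[simp] lemma rinnerSL_apply (x y : E2) : rinnerSL x y = inner ℝ x y := rfl

lemma rinnerSL_norm (x : E2) : ‖rinnerSL x‖ = ‖x‖ := innerSL_apply_norm (𝕜 := ℝ) x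

lemma hasFDerivAt_norm' {x : E2} (hx : x ≠ 0) :
    HasFDerivAt (fun y : E2 => ‖y‖) (‖x‖⁻¹ • rinnerSL x) x := by
  have hnx : (0:ℝ) < ‖x‖ := norm_pos_iff.mpr hx
  have h1 : HasFDerivAt (fun y : E2 => ‖y‖ ^ 2) (2 • innerSL ℝ x) x :=
    (hasStrictFDerivAt_norm_sq x).hasFDerivAt
  have h2 : HasDerivAt Real.sqrt (1 / (2 * Real.sqrt (‖x‖^2))) (‖x‖^2) :=
    Real.hasDerivAt_sqrt (by positivity)
  have h3 := h2.comp_hasFDerivAt x h1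
  have heq : (fun y : E2 => Real.sqrt (‖y‖^2)) = fun y : E2 => ‖y‖ := by
    funext y; rw [Real.sqrt_sq (norm_nonneg y)]
  rw [Function.comp_def, heq] at h3
  refine h3.congr_fderiv (Eq.symm ?_)
  rw [Real.sqrt_sq (norm_nonneg x)]
  ext v
  show ‖x‖⁻¹ * (inner ℝ x v) = _
  simp [two_smul]
  ring

lemma radial_fderiv {g : ℝ → ℝ} {d : ℝ} {x : E2} (hx : x ≠ 0)
    (hg : HasDerivAt g d ‖x‖) :
    HasFDerivAt (fun y : E2 => g ‖y‖) ((d * ‖x‖⁻¹) • rinnerSL x) x := by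
  have h := hg.comp_hasFDerivAt x (hasFDerivAt_norm' hx)
  refine h.congr_fderiv (Eq.symm ?_)
  rw [smul_smul]

lemma radial_fderiv2 {k : ℝ → ℝ} {kd : ℝ} {x : E2} (hx : x ≠ 0)
    (hk : HasDerivAt k kd ‖x‖) :
    HasFDerivAt (fun y : E2 => k ‖y‖ • rinnerSL y)
      ((k ‖x‖ • rinnerSL) +
        ((kd * ‖x‖⁻¹) • rinnerSL x).smulRight (rinnerSL x)) x := by
  have hm : HasFDerivAt (fun y : E2 => k ‖y‖) ((kd * ‖x‖⁻¹) • rinnerSL x) x :=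
    radial_fderiv hx hk
  exact hm.smul rinnerSL.hasFDerivAt

lemma sum_sq_eq (x : E2) : ∑ i : Fin 2, x i * x i = ‖x‖ ^ 2 := by
  rw [EuclideanSpace.norm_eq, Real.sq_sqrt (by positivity)]
  simp [Real.norm_eq_abs, sq_abs, sq]

lemma lap_sum {x : E2} (k0 kd0 : ℝ) :
    ∑ i : Fin 2, ((k0 • rinnerSL) +
        ((kd0 * ‖x‖⁻¹) • rinnerSL x).smulRight (rinnerSL x))
        (EuclideanSpace.single i 1) (EuclideanSpace.single i 1)
      = 2 * k0 + kd0 * ‖x‖⁻¹ * ‖x‖ ^ 2 := by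
  have h1 : ∀ i : Fin 2, (inner ℝ x (EuclideanSpace.single i 1) : ℝ) = x i := by
    intro i; rw [real_inner_comm]; simp [EuclideanSpace.inner_single_left]
  have h2 : ∀ i : Fin 2,
      (inner ℝ (EuclideanSpace.single i (1:ℝ)) (EuclideanSpace.single i (1:ℝ)) : ℝ) = 1 := by
    intro i; simp [EuclideanSpace.inner_single_left]
  simp only [ContinuousLinearMap.add_apply, ContinuousLinearMap.smul_apply,
    ContinuousLinearMap.smulRight_apply, rinnerSL_apply, h1, h2, smul_eq_mul,
    Finset.sum_add_distrib]
  rw [← sum_sq_eq]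
  simp [Finset.mul_sum, Finset.sum_const]
  ring

lemma lap_sum0 (k0 : ℝ) :
    ∑ i : Fin 2, (k0 • rinnerSL)
        (EuclideanSpace.single i 1) (EuclideanSpace.single i 1) = 2 * k0 := by
  have h2 : ∀ i : Fin 2,
      (inner ℝ (EuclideanSpace.single i (1:ℝ)) (EuclideanSpace.single i (1:ℝ)) : ℝ) = 1 := by
    intro i; simp [EuclideanSpace.inner_single_left]
  simp [h2, Finset.sum_const]
set_option maxHeartbeats 2000000 in
/-- The piecewise-defined W_{δ,a} (Uhlenbeck-type profile glued to
a logarithm via the matching condition) is C¹ in B_R(0), vanishes on ∂B_R(0)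
and solves -δ²ΔW = (W - a)₊^p in B_R(0). -/
theorem stmt5 (p a δ R : ℝ) (hp : 1 < p) (ha : 0 < a) (hδ : 0 < δ) (hR : 0 < R)
    (φ : ℝ → ℝ)
    (hreg : ContDiff ℝ 2 φ)
    (hpos : ∀ r ∈ Set.Ico (0:ℝ) 1, 0 < φ r)
    (hb : φ 1 = 0)
    (hode : ∀ r ∈ Set.Ioo (0:ℝ) 1,
      deriv (deriv φ) r + deriv φ r / r = -(φ r ^ p))
    (h0 : deriv φ 0 = 0)
    (hder : deriv φ 1 < 0)
    (s : ℝ) (hs : s ∈ Set.Ioo 0 R)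
    (hmatch : δ ^ (2 / (p - 1)) * s ^ (-(2 / (p - 1))) * deriv φ 1
      = a / Real.log (s / R))
    (W : EuclideanSpace ℝ (Fin 2) → ℝ)
    (hW1 : ∀ x : EuclideanSpace ℝ (Fin 2), ‖x‖ ≤ s →
      W x = a + δ ^ (2 / (p - 1)) * s ^ (-(2 / (p - 1))) * φ (‖x‖ / s))
    (hW2 : ∀ x : EuclideanSpace ℝ (Fin 2), s ≤ ‖x‖ → ‖x‖ ≤ R →
      W x = a * Real.log (‖x‖ / R) / Real.log (s / R)) :
    ContDiffOn ℝ 1 W (Metric.ball (0 : EuclideanSpace ℝ (Fin 2)) R) ∧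
    (∀ x ∈ Metric.sphere (0 : EuclideanSpace ℝ (Fin 2)) R, W x = 0) ∧
    ∀ x ∈ Metric.ball (0 : EuclideanSpace ℝ (Fin 2)) R,
      -(δ ^ 2 * lap W x) = max (W x - a) 0 ^ p := by
  obtain ⟨hs0, hsR⟩ := hs
  have hsne : s ≠ 0 := ne_of_gt hs0
  have hRne : R ≠ 0 := ne_of_gt hR
  set c : ℝ := δ ^ (2 / (p - 1)) * s ^ (-(2 / (p - 1))) with hcdef
  set L : ℝ := Real.log (s / R) with hLdef
  have hp1 : (0:ℝ) < p - 1 := by linarith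
  have hc : 0 < c := mul_pos (Real.rpow_pos_of_pos hδ _) (Real.rpow_pos_of_pos hs0 _)
  have hL : L < 0 := Real.log_neg (div_pos hs0 hR) ((div_lt_one hR).mpr hsR)
  have hLne : L ≠ 0 := ne_of_lt hL
  -- the scaling identity  c ^ p = δ^2 * c / s^2
  have hcp : c ^ p = δ ^ 2 * c / s ^ 2 := by
    have he : (2/(p-1)) * (p-1) = 2 := by field_simp
    have h1 : c ^ (p - 1) = δ ^ 2 / s ^ 2 := by
      rw [hcdef, Real.mul_rpow (Real.rpow_nonneg hδ.le _) (Real.rpow_nonneg hs0.le _),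
        ← Real.rpow_mul hδ.le, ← Real.rpow_mul hs0.le, he,
        show -(2/(p-1)) * (p-1) = -2 by rw [neg_mul, he], Real.rpow_neg hs0.le,
        show (2:ℝ) = ((2:ℕ):ℝ) by norm_num, Real.rpow_natCast, Real.rpow_natCast]
      ring
    have h2 : c ^ p = c ^ (p-1) * c := by
      nth_rewrite 1 [show p = (p-1) + 1 by ring]
      rw [Real.rpow_add hc, Real.rpow_one]
    rw [h2, h1]; ring
  -- regularity pieces of φ
  have hφd : Differentiable ℝ φ := hreg.differentiable (by norm_num)
  have hφ'c1 : ContDiff ℝ 1 (deriv φ) := by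
    have := (contDiff_succ_iff_deriv (n := 1)).mp (by exact_mod_cast hreg)
    exact this.2.2
  have hφ'd : Differentiable ℝ (deriv φ) := hφ'c1.differentiable one_ne_zero
  have hφ''c : Continuous (deriv (deriv φ)) := by
    have := (contDiff_succ_iff_deriv (n := 0)).mp (by exact_mod_cast hφ'c1)
    exact this.2.2.continuous
  
  -- slope limit at 0
  have slopelim : Filter.Tendsto (fun t => deriv φ t / t) (nhdsWithin 0 {(0:ℝ)}ᶜ)
      (nhds (deriv (deriv φ) 0)) := by
    have hd2 : HasDerivAt (deriv φ) (deriv (deriv φ) 0) 0 := (hφ'd 0).hasDerivAt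
    rw [hasDerivAt_iff_tendsto_slope] at hd2
    refine hd2.congr (fun t => ?_)
    rw [slope_def_field, h0, sub_zero, sub_zero]
  -- matching of second derivative at 1
  have L1 : deriv (deriv φ) 1 + deriv φ 1 = 0 := by
    have hne : (nhdsWithin (1:ℝ) (Set.Iio 1)).NeBot := by infer_instance
    have t1 : Filter.Tendsto (fun r => deriv (deriv φ) r + deriv φ r / r)
        (nhdsWithin 1 (Set.Iio 1)) (nhds (deriv (deriv φ) 1 + deriv φ 1 / 1)) := by
      apply Filter.Tendsto.add
      · exact (hφ''c.continuousAt.tendsto).mono_left nhdsWithin_le_nhds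
      · exact ((hφ'c1.continuous.continuousAt.tendsto).div
          (continuous_id.continuousAt.tendsto) one_ne_zero).mono_left nhdsWithin_le_nhds
    have t2 : Filter.Tendsto (fun r => -(φ r ^ p))
        (nhdsWithin 1 (Set.Iio 1)) (nhds (-(φ 1 ^ p))) := by
      apply Filter.Tendsto.neg
      exact ((Real.continuousAt_rpow_const (φ 1) p (Or.inr (by linarith))).comp
        (hreg.continuous.continuousAt)).tendsto.mono_left nhdsWithin_le_nhds
    have hev : ∀ᶠ r in nhdsWithin (1:ℝ) (Set.Iio 1),
        deriv (deriv φ) r + deriv φ r / r = -(φ r ^ p) := by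
      filter_upwards [Ioo_mem_nhdsLT_of_mem (show (1:ℝ) ∈ Set.Ioc 0 1 by constructor <;> norm_num)]
        with r hr
      exact hode r hr
    have := tendsto_nhds_unique (t1.congr' hev) t2
    rw [hb, Real.zero_rpow (by linarith), neg_zero, div_one] at this
    linarith [this]
  -- equation for second derivative at 0
  have L2 : 2 * deriv (deriv φ) 0 = -(φ 0 ^ p) := by
    have hφ0 : 0 < φ 0 := hpos 0 ⟨le_refl _, one_pos⟩
    have t1 : Filter.Tendsto (fun r => deriv (deriv φ) r + deriv φ r / r)
        (nhdsWithin 0 (Set.Ioi 0)) (nhds (deriv (deriv φ) 0 + deriv (deriv φ) 0)) := by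
      apply Filter.Tendsto.add
      · exact (hφ''c.continuousAt.tendsto).mono_left nhdsWithin_le_nhds
      · exact slopelim.mono_left (nhdsWithin_mono _ (fun x hx => ne_of_gt hx))
    have t2 : Filter.Tendsto (fun r => -(φ r ^ p))
        (nhdsWithin 0 (Set.Ioi 0)) (nhds (-(φ 0 ^ p))) := by
      apply Filter.Tendsto.neg
      exact ((Real.continuousAt_rpow_const (φ 0) p (Or.inl (ne_of_gt hφ0))).comp
        (hreg.continuous.continuousAt)).tendsto.mono_left nhdsWithin_le_nhds
    have hev : ∀ᶠ r in nhdsWithin (0:ℝ) (Set.Ioi 0),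
        deriv (deriv φ) r + deriv φ r / r = -(φ r ^ p) := by
      filter_upwards [Ioo_mem_nhdsGT_of_mem (show (0:ℝ) ∈ Set.Ico 0 1 by constructor <;> norm_num)]
        with r hr
      exact hode r hr
    have := tendsto_nhds_unique (t1.congr' hev) t2
    linarith [this]
  -- 1D profile functions
  set g : ℝ → ℝ := fun r => if r ≤ s then a + c * φ (r/s) else a * Real.log (r/R) / L with hgdef
  set g1 : ℝ → ℝ := fun r => if r ≤ s then (c/s) * deriv φ (r/s) else a / (L * r) with hg1def
  set g2 : ℝ → ℝ := fun r => if r ≤ s then (c/s^2) * deriv (deriv φ) (r/s)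
    else -(a / (L * r^2)) with hg2def
  set k : ℝ → ℝ := fun r => if r = 0 then (c/s^2) * deriv (deriv φ) 0 else g1 r / r with hkdef
  set kd : ℝ → ℝ := fun r => g2 r / r - g1 r / r^2 with hkddef
  have hφ1 : φ (s/s) = 0 := by rw [div_self hsne, hb]
  -- derivatives of the two model functions
  have hinner : ∀ u : ℝ, HasDerivAt (fun t => a + c * φ (t/s)) ((c/s) * deriv φ (u/s)) u := by
    intro u
    have h1 : HasDerivAt (fun t : ℝ => t / s) (1/s) u := (hasDerivAt_id u).div_const s
    have h2 := ((hφd (u/s)).hasDerivAt).comp u h1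
    have h3 := (h2.const_mul c).const_add a
    refine h3.congr_deriv (Eq.symm ?_)
    ring
  have hinner1 : ∀ u : ℝ,
      HasDerivAt (fun t => (c/s) * deriv φ (t/s)) ((c/s^2) * deriv (deriv φ) (u/s)) u := by
    intro u
    have h1 : HasDerivAt (fun t : ℝ => t / s) (1/s) u := (hasDerivAt_id u).div_const s
    have h2 := ((hφ'd (u/s)).hasDerivAt).comp u h1
    have h3 := h2.const_mul (c/s)
    refine h3.congr_deriv (Eq.symm ?_)
    ring
  have houter : ∀ u : ℝ, 0 < u → HasDerivAt (fun t => a * Real.log (t/R) / L) (a / (L * u)) u := by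
    intro u hu
    have h1 : HasDerivAt (fun t : ℝ => t / R) (1/R) u := (hasDerivAt_id u).div_const R
    have h2 : HasDerivAt Real.log (u/R)⁻¹ (u/R) :=
      Real.hasDerivAt_log (ne_of_gt (div_pos hu hR))
    have h3 := (h2.comp u h1).const_mul a |>.div_const L
    refine h3.congr_deriv (Eq.symm ?_)
    field_simp
  have houter1 : ∀ u : ℝ, 0 < u → HasDerivAt (fun t => a / (L * t)) (-(a / (L * u^2))) u := by
    intro u hu
    have h1 : HasDerivAt (fun t : ℝ => a/L * t⁻¹) ((a/L) * (-(u^2)⁻¹)) u :=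
      (hasDerivAt_inv (ne_of_gt hu)).const_mul (a/L)
    have heq : (fun t : ℝ => a/L * t⁻¹) = fun t : ℝ => a / (L * t) := by
      funext t; rw [← div_eq_mul_inv, div_div]
    rw [heq] at h1
    convert h1 using 1
    field_simp
  -- g agrees with the outer formula on [s, ∞)
  have houter_eq : ∀ r : ℝ, s ≤ r → g r = a * Real.log (r/R) / L := by
    intro r hr
    rcases eq_or_lt_of_le hr with h|h
    · rw [← h]
      simp only [hgdef, if_pos (le_refl s), hφ1]
      rw [← hLdef, mul_div_assoc, div_self hLne]
      ring
    · simp only [hgdef]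
      rw [if_neg (not_le.mpr h)]
  -- matching values
  have match1 : a / (L * s) = (c/s) * deriv φ (s/s) := by
    rw [div_self hsne, ← div_div, ← hmatch]
    ring
  have match2 : -(a / (L * s^2)) = (c/s^2) * deriv (deriv φ) (s/s) := by
    rw [div_self hsne]
    have hd2 : deriv (deriv φ) 1 = - deriv φ 1 := by linarith
    rw [hd2, ← div_div, ← hmatch]
    ring
  -- derivative of g
  have HDg : ∀ r : ℝ, 0 < r → HasDerivAt g (g1 r) r := by
    intro r h0r
    rcases lt_trichotomy r s with hlt|heq|hgt
    · have hev : g =ᶠ[nhds r] (fun t => a + c * φ (t/s)) := by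
        filter_upwards [Iio_mem_nhds hlt] with t ht
        simp only [hgdef]
        rw [if_pos (le_of_lt ht)]
      have h := (hinner r).congr_of_eventuallyEq hev
      have hval : g1 r = (c/s) * deriv φ (r/s) := by
        simp only [hg1def]; rw [if_pos (le_of_lt hlt)]
      rw [hval]; exact h
    · subst heq
      have hl : HasDerivWithinAt g ((c/r) * deriv φ (r/r)) (Set.Iic r) r := by
        refine ((hinner r).hasDerivWithinAt).congr (fun t ht => ?_) ?_
        · simp only [hgdef]; rw [if_pos (show t ≤ r from ht)]
        · simp only [hgdef]; rw [if_pos (le_refl r)]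
      have hr : HasDerivWithinAt g ((c/r) * deriv φ (r/r)) (Set.Ici r) r := by
        have h := ((houter r h0r).hasDerivWithinAt).congr
          (fun t ht => houter_eq t ht) (houter_eq r (le_refl r))
        rw [match1] at h
        exact h
      have hu := hl.union hr
      rw [Set.Iic_union_Ici] at hu
      have hval : g1 r = (c/r) * deriv φ (r/r) := by
        simp only [hg1def]; rw [if_pos (le_refl r)]
      rw [hval]
      exact hu.hasDerivAt Filter.univ_mem
    · have hev : g =ᶠ[nhds r] (fun t => a * Real.log (t/R) / L) := by
        filter_upwards [Ioi_mem_nhds hgt] with t ht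
        exact houter_eq t (le_of_lt ht)
      have h := (houter r h0r).congr_of_eventuallyEq hev
      have hval : g1 r = a / (L * r) := by
        simp only [hg1def]; rw [if_neg (not_le.mpr hgt)]
      rw [hval]; exact h
  -- derivative of g1
  have HDg1 : ∀ r : ℝ, 0 < r → HasDerivAt g1 (g2 r) r := by
    intro r h0r
    rcases lt_trichotomy r s with hlt|heq|hgt
    · have hev : g1 =ᶠ[nhds r] (fun t => (c/s) * deriv φ (t/s)) := by
        filter_upwards [Iio_mem_nhds hlt] with t ht
        simp only [hg1def]
        rw [if_pos (le_of_lt ht)]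
      have h := (hinner1 r).congr_of_eventuallyEq hev
      have hval : g2 r = (c/s^2) * deriv (deriv φ) (r/s) := by
        simp only [hg2def]; rw [if_pos (le_of_lt hlt)]
      rw [hval]; exact h
    · subst heq
      have hl : HasDerivWithinAt g1 ((c/r^2) * deriv (deriv φ) (r/r)) (Set.Iic r) r := by
        refine ((hinner1 r).hasDerivWithinAt).congr (fun t ht => ?_) ?_
        · simp only [hg1def]; rw [if_pos (show t ≤ r from ht)]
        · simp only [hg1def]; rw [if_pos (le_refl r)]
      have hr : HasDerivWithinAt g1 ((c/r^2) * deriv (deriv φ) (r/r)) (Set.Ici r) r := by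
        have hout_eq : ∀ t : ℝ, r ≤ t → g1 t = a / (L * t) := by
          intro t ht
          rcases eq_or_lt_of_le ht with h'|h'
          · rw [← h']
            simp only [hg1def]; rw [if_pos (le_refl r)]
            rw [← match1]
          · simp only [hg1def]; rw [if_neg (not_le.mpr h')]
        have h := ((houter1 r h0r).hasDerivWithinAt).congr
          (fun t ht => hout_eq t ht) (hout_eq r (le_refl r))
        rw [match2] at h
        exact h
      have hu := hl.union hr
      rw [Set.Iic_union_Ici] at hu
      have hval : g2 r = (c/r^2) * deriv (deriv φ) (r/r) := by
        simp only [hg2def]; rw [if_pos (le_refl r)]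
      rw [hval]
      exact hu.hasDerivAt Filter.univ_mem
    · have hev : g1 =ᶠ[nhds r] (fun t => a / (L * t)) := by
        filter_upwards [Ioi_mem_nhds hgt] with t ht
        simp only [hg1def]; rw [if_neg (not_le.mpr ht)]
      have h := (houter1 r h0r).congr_of_eventuallyEq hev
      have hval : g2 r = -(a / (L * r^2)) := by
        simp only [hg2def]; rw [if_neg (not_le.mpr hgt)]
      rw [hval]; exact h
  -- derivative of k away from 0
  have HDk : ∀ r : ℝ, 0 < r → HasDerivAt k (kd r) r := by
    intro r h0r
    have hev : k =ᶠ[nhds r] (fun t => g1 t / t) := by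
      filter_upwards [Ioi_mem_nhds h0r] with t ht
      simp only [hkdef]; rw [if_neg (ne_of_gt ht)]
    have h := ((HDg1 r h0r).div (hasDerivAt_id r) (ne_of_gt h0r)).congr_of_eventuallyEq hev
    have hval : kd r = (g2 r * r - g1 r * 1) / r ^ 2 := by
      simp only [hkddef]
      field_simp
    rw [hval]; exact h
  -- continuity of k at 0 from the right
  have hk0 : k 0 = (c/s^2) * deriv (deriv φ) 0 := by simp [hkdef]
  have kc0 : Filter.Tendsto k (nhdsWithin 0 (Set.Ici 0)) (nhds (k 0)) := by
    rw [show Set.Ici (0:ℝ) = insert 0 (Set.Ioi 0) from Set.Ioi_insert.symm,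
      nhdsWithin_insert]
    refine Filter.tendsto_sup.mpr ⟨(Filter.tendsto_pure_pure k 0).mono_right (pure_le_nhds _), ?_⟩
    have base : Filter.Tendsto (fun r => (c/s^2) * (deriv φ (r/s) / (r/s)))
        (nhdsWithin 0 (Set.Ioi 0)) (nhds ((c/s^2) * deriv (deriv φ) 0)) := by
      apply Filter.Tendsto.const_mul
      apply slopelim.comp
      rw [tendsto_nhdsWithin_iff]
      constructor
      · have := ((continuous_id.div_const s).tendsto (0:ℝ)).mono_left
          (nhdsWithin_le_nhds (s := Set.Ioi 0))
        simpa using this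
      · filter_upwards [self_mem_nhdsWithin] with r hr
        exact ne_of_gt (div_pos hr hs0)
    rw [hk0]
    refine base.congr' ?_
    filter_upwards [self_mem_nhdsWithin,
      (nhdsWithin_le_nhds (Iio_mem_nhds hs0))] with r hr hrs
    have hrne : r ≠ 0 := ne_of_gt hr
    simp only [hkdef, hg1def]
    rw [if_neg hrne, if_pos (le_of_lt hrs)]
    field_simp
  -- W agrees with the radial profile on the closed ball
  have WG : ∀ y : E2, ‖y‖ ≤ R → W y = g ‖y‖ := by
    intro y hy
    by_cases h : ‖y‖ ≤ s
    · rw [hW1 y h]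
      simp only [hgdef]; rw [if_pos h]
    · rw [hW2 y (le_of_not_ge h) hy]
      simp only [hgdef]; rw [if_neg h]
  set F : E2 → (E2 →L[ℝ] ℝ) := fun y => k ‖y‖ • rinnerSL y with hFdef
  have hF0 : F 0 = 0 := by simp [hFdef]
  have kcontnorm : Filter.Tendsto (fun y : E2 => k ‖y‖) (nhds 0) (nhds (k 0)) := by
    apply kc0.comp
    rw [tendsto_nhdsWithin_iff]
    exact ⟨by simpa using continuous_norm.tendsto (0:E2),
      Filter.Eventually.of_forall (fun y => norm_nonneg y)⟩
  have HF : ∀ y ∈ Metric.ball (0:E2) R, HasFDerivAt W (F y) y := by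
    intro y hy
    rw [mem_ball_zero_iff] at hy
    by_cases hy0 : y = 0
    · subst hy0
      rw [hF0]
      rw [hasFDerivAt_iff_isLittleO_nhds_zero]
      have hφ0' : HasDerivAt φ 0 0 := by
        have := (hφd 0).hasDerivAt; rwa [h0] at this
      have hlo : (fun t => φ t - φ 0) =o[nhds (0:ℝ)] (fun t => t) := by
        simpa using hasDerivAt_iff_isLittleO.mp hφ0'
      have htend : Filter.Tendsto (fun h : E2 => ‖h‖ / s) (nhds 0) (nhds 0) := by
        have := (continuous_norm.tendsto (0:E2)).div_const s
        simpa using this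
      have hcomp := hlo.comp_tendsto htend
      have hO : (fun h : E2 => ‖h‖ / s) =O[nhds (0:E2)] (fun h : E2 => h) := by
        rw [Asymptotics.isBigO_iff]
        refine ⟨s⁻¹, Filter.Eventually.of_forall (fun h => ?_)⟩
        rw [Real.norm_eq_abs, abs_div, abs_of_nonneg (norm_nonneg h), abs_of_pos hs0,
          div_eq_inv_mul]
      have final := ((hcomp.trans_isBigO hO).const_mul_left c)
      refine final.congr' ?_ (by rfl)
      filter_upwards [Metric.closedBall_mem_nhds (0:E2) hs0] with h hh
      rw [Metric.mem_closedBall, dist_zero_right] at hh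
      rw [zero_add, hW1 h hh, hW1 0 (by simpa using hs0.le)]
      simp only [ContinuousLinearMap.zero_apply, norm_zero, zero_div, Function.comp]
      ring
    · have hr0 : 0 < ‖y‖ := norm_pos_iff.mpr hy0
      have h := radial_fderiv (g := g) hy0 (HDg ‖y‖ hr0)
      have hev : (fun z : E2 => g ‖z‖) =ᶠ[nhds y] W := by
        filter_upwards [Metric.isOpen_ball.mem_nhds (mem_ball_zero_iff.mpr hy)] with z hz
        exact (WG z (le_of_lt (mem_ball_zero_iff.mp hz))).symm
      have h2 := h.congr_of_eventuallyEq hev.symm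
      have hval : F y = (g1 ‖y‖ * ‖y‖⁻¹) • rinnerSL y := by
        simp only [hFdef, hkdef]
        rw [if_neg (ne_of_gt hr0), div_eq_mul_inv]
      rw [hval]
      exact h2
  have Fcont : ContinuousOn F (Metric.ball (0:E2) R) := by
    intro y _
    apply ContinuousAt.continuousWithinAt
    by_cases hy0 : y = 0
    · subst hy0
      have h1 : ContinuousAt (fun z : E2 => k ‖z‖) 0 := by
        show Filter.Tendsto (fun z : E2 => k ‖z‖) (nhds 0) (nhds (k ‖(0:E2)‖))
        rw [norm_zero]
        exact kcontnorm
      exact h1.smul rinnerSL.continuous.continuousAt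
    · have hr0 : 0 < ‖y‖ := norm_pos_iff.mpr hy0
      have h1 : ContinuousAt (fun z : E2 => k ‖z‖) y :=
        ((HDk ‖y‖ hr0).continuousAt).comp continuous_norm.continuousAt
      exact h1.smul rinnerSL.continuous.continuousAt
  refine ⟨?_, ?_, ?_⟩
  · intro x hx
    apply ContDiffAt.contDiffWithinAt
    rw [contDiffAt_one_iff]
    exact ⟨F, Metric.ball 0 R, Metric.isOpen_ball.mem_nhds hx, Fcont, HF⟩
  · intro x hx
    rw [mem_sphere_zero_iff_norm] at hx
    rw [hW2 x (hx ▸ hsR.le) hx.le, hx, div_self hRne, Real.log_one]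
    ring
  · intro x hx
    have hxR : ‖x‖ < R := mem_ball_zero_iff.mp hx
    have hfev : fderiv ℝ W =ᶠ[nhds x] F := by
      filter_upwards [Metric.isOpen_ball.mem_nhds hx] with z hz
      exact (HF z hz).fderiv
    have hlapstep : ∀ D : E2 →L[ℝ] E2 →L[ℝ] ℝ, HasFDerivAt F D x →
        lap W x = ∑ i : Fin 2, D (EuclideanSpace.single i 1) (EuclideanSpace.single i 1) := by
      intro D hD
      unfold lap
      refine Finset.sum_congr rfl (fun i _ => ?_)
      rw [iteratedFDeriv_two_apply]
      have heq2 : fderiv ℝ (fderiv ℝ W) x = D := by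
        rw [hfev.fderiv_eq, hD.fderiv]
      rw [heq2]
      simp
    have hpne : p ≠ 0 := by linarith
    by_cases hx0 : x = 0
    · subst hx0
      have hD : HasFDerivAt F (k 0 • rinnerSL) 0 := by
        rw [hasFDerivAt_iff_isLittleO_nhds_zero, Asymptotics.isLittleO_iff]
        intro ε hε
        filter_upwards [Metric.tendsto_nhds.mp kcontnorm ε hε] with h hlt
        have heq : F (0 + h) - F 0 - (k 0 • rinnerSL) h = (k ‖h‖ - k 0) • rinnerSL h := by
          rw [zero_add, hF0, sub_zero]
          simp only [hFdef, ContinuousLinearMap.smul_apply]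
          exact (sub_smul _ _ _).symm
        have heq2 : (k ‖h‖ - k 0) • rinnerSL h = rinnerSL ((k ‖h‖ - k 0) • h) :=
          (map_smul rinnerSL _ _).symm
        rw [heq, heq2, rinnerSL_norm, norm_smul, Real.norm_eq_abs]
        exact mul_le_mul (le_of_lt (by rwa [Real.dist_eq] at hlt)) le_rfl (norm_nonneg _) hε.le
      have hlap : lap W 0 = 2 * k 0 := by rw [hlapstep _ hD, lap_sum0]
      have hW0 : W 0 - a = c * φ 0 := by
        rw [hW1 0 (by simpa using hs0.le)]
        simp only [norm_zero, zero_div]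
        ring
      have hφ0 : 0 < φ 0 := hpos 0 ⟨le_refl _, one_pos⟩
      rw [hlap, hk0, hW0, max_eq_left (by positivity), Real.mul_rpow hc.le hφ0.le, hcp]
      have h2d : deriv (deriv φ) 0 = -(φ 0 ^ p) / 2 := by linarith
      rw [h2d]
      field_simp
    · have hr0 : 0 < ‖x‖ := norm_pos_iff.mpr hx0
      have hkr : k ‖x‖ = g1 ‖x‖ / ‖x‖ := by
        simp only [hkdef]; rw [if_neg (ne_of_gt hr0)]
      have hD : HasFDerivAt F ((k ‖x‖ • rinnerSL) +
          ((kd ‖x‖ * ‖x‖⁻¹) • rinnerSL x).smulRight (rinnerSL x)) x :=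
        radial_fderiv2 hx0 (HDk ‖x‖ hr0)
      have hlap2 : lap W x = g2 ‖x‖ + g1 ‖x‖ / ‖x‖ := by
        rw [hlapstep _ hD, lap_sum, hkr]
        simp only [hkddef]
        field_simp
        ring
      rw [WG x hxR.le, hlap2]
      rcases lt_trichotomy ‖x‖ s with hlt|heq|hgt
      · -- inner region
        have hle := le_of_lt hlt
        have ht : ‖x‖ / s ∈ Set.Ioo (0:ℝ) 1 :=
          ⟨div_pos hr0 hs0, (div_lt_one hs0).mpr hlt⟩
        have hφt : 0 < φ (‖x‖/s) := hpos _ ⟨ht.1.le, ht.2⟩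
        have hlapval : g2 ‖x‖ + g1 ‖x‖ / ‖x‖
            = (c/s^2) * (deriv (deriv φ) (‖x‖/s) + deriv φ (‖x‖/s) / (‖x‖/s)) := by
          simp only [hg2def, hg1def]
          rw [if_pos hle, if_pos hle]
          field_simp
        have hgval : g ‖x‖ - a = c * φ (‖x‖/s) := by
          simp only [hgdef]; rw [if_pos hle]; ring
        rw [hlapval, hode _ ht, hgval, max_eq_left (by positivity),
          Real.mul_rpow hc.le hφt.le, hcp]
        field_simp
      · -- interface
        have hgval : g ‖x‖ - a = 0 := by
          simp only [hgdef]; rw [if_pos (le_of_eq heq), heq, div_self hsne, hb]; ring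
        have hlapval : g2 ‖x‖ + g1 ‖x‖ / ‖x‖ = 0 := by
          simp only [hg2def, hg1def]
          rw [if_pos (le_of_eq heq), if_pos (le_of_eq heq), heq, div_self hsne,
            show deriv (deriv φ) 1 = -(deriv φ 1) by linarith]
          field_simp
          ring
        rw [hlapval, hgval, max_self, Real.zero_rpow hpne]
        simp
      · -- outer region
        have hgt' := le_of_lt hgt
        have hlapval : g2 ‖x‖ + g1 ‖x‖ / ‖x‖ = 0 := by
          simp only [hg2def, hg1def]
          rw [if_neg (not_le.mpr hgt), if_neg (not_le.mpr hgt)]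
          field_simp
          ring
        have hXL : L ≤ Real.log (‖x‖/R) := by
          rw [hLdef]
          rw [Real.log_le_log_iff (div_pos hs0 hR) (div_pos hr0 hR)]
          gcongr
        have hgle : g ‖x‖ - a ≤ 0 := by
          rw [houter_eq _ hgt']
          have heq2 : a * Real.log (‖x‖/R) / L - a
              = a * ((Real.log (‖x‖/R) - L)/L) := by field_simp
          rw [heq2]
          exact mul_nonpos_of_nonneg_of_nonpos ha.le
            (div_nonpos_of_nonneg_of_nonpos (by linarith) hL.le)
        rw [hlapval, max_eq_right hgle, Real.zero_rpow hpne]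
        simp
end
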